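/- arXiv:1803.03602 — 2 statements merged into one kernel-verified Lean document; each statement's English description precedes it below -/
import Mathlib

section
/- Let n ≥ 1, k ≥ 2 and d ≥ 1 be integers, and let λ be a partition of d with l(λ) ≤ n. Then there exist a positive integer s and non-empty partitions μ_1, …, μ_s such that λ = μ_1 + μ_2 + … + μ_s (horizontal concatenation), n(k−1) < |μ_i| ≤ kn for all i < s, |μ_s| ≤ kn, and l(μ_i) ≤ n for all i. -/
/-- A partition, encoded as a finitely supported function `ℕ →₀ ℕ` listing its parts
`λ_0 ≥ λ_1 ≥ …` (indexed from `0`): the parts must be weakly decreasing. -/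
def IsPartitionFun (f : ℕ →₀ ℕ) : Prop := ∀ ⦃i j : ℕ⦄, i ≤ j → f j ≤ f i

/-- The size `|λ| = Σ_i λ_i` of a partition. -/
def partSize (f : ℕ →₀ ℕ) : ℕ := f.sum fun _ v => v

/-- The length `l(λ)` of a partition: the number of nonzero parts. -/
def partLen (f : ℕ →₀ ℕ) : ℕ := f.support.card

lemma partSize_mapRange (lam : ℕ →₀ ℕ) (f : ℕ → ℕ) (h : f 0 = 0) :
    partSize (lam.mapRange f h) = ∑ i ∈ lam.support, f (lam i) := by
  unfold partSize
  rw [Finsupp.sum_of_support_subset _ (Finsupp.support_mapRange) _ (fun _ _ => rfl)]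
  simp [Finsupp.mapRange_apply]

lemma aux (n k : ℕ) (hn : 1 ≤ n) (hk : 2 ≤ k) :
    ∀ d, 1 ≤ d → ∀ lam : ℕ →₀ ℕ, IsPartitionFun lam → partSize lam = d → partLen lam ≤ n →
    ∃ (s : ℕ) (mu : Fin s → (ℕ →₀ ℕ)), 0 < s ∧
      (∀ i, IsPartitionFun (mu i)) ∧
      lam = ∑ i, mu i ∧
      (∀ i, 0 < partSize (mu i)) ∧
      (∀ i : Fin s, (i : ℕ) + 1 < s → n * (k - 1) < partSize (mu i)) ∧
      (∀ i, partSize (mu i) ≤ k * n) ∧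
      (∀ i, partLen (mu i) ≤ n) := by
  intro d
  induction d using Nat.strong_induction_on with
  | _ d IH =>
    intro hd lam hlam hsize hlen
    by_cases hcase : d ≤ k * n
    · refine ⟨1, fun _ => lam, one_pos, fun _ => hlam, ?_, ?_, ?_, ?_, fun _ => hlen⟩
      · simp
      · intro i; show 0 < partSize lam; omega
      · intro i hi; simp at hi
      · intro i; show partSize lam ≤ k * n; omega
    · push_neg at hcase
      obtain ⟨m, rfl⟩ : ∃ m, k = m + 1 := ⟨k - 1, by omega⟩
      have hm : 1 ≤ m := by omega
      set T := lam.support with hT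
      set S : ℕ → ℕ := fun c => ∑ i ∈ T, min (lam i) c with hS
      have hSd : S d = d := by
        have h1 : ∀ i ∈ T, min (lam i) d = lam i := by
          intro i hi
          have : lam i ≤ d := by
            rw [← hsize]
            exact Finset.single_le_sum (fun _ _ => Nat.zero_le _) hi
          omega
        rw [hS]
        simp only [Finset.sum_congr rfl h1]
        rw [← hsize]; rfl
      have hstep : ∀ c, S (c + 1) ≤ S c + n := by
        intro c
        have h1 : S (c + 1) ≤ ∑ i ∈ T, (min (lam i) c + 1) :=
          Finset.sum_le_sum (fun i _ => by omega)
        rw [Finset.sum_add_distrib, Finset.sum_const, smul_eq_mul, mul_one] at h1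
        have h2 : (∑ i ∈ T, min (lam i) c) = S c := rfl
        rw [h2] at h1
        have : T.card ≤ n := hlen
        omega
      have hP : ∃ c, n * m < S c := ⟨d, by rw [hSd]; nlinarith⟩
      set c := Nat.find hP with hc
      have hc1 : n * m < S c := Nat.find_spec hP
      have hc0 : c ≠ 0 := by
        intro h
        have : S 0 = 0 := by simp [hS]
        rw [h, this] at hc1; omega
      have hcpred : ¬ (n * m < S (c - 1)) := Nat.find_min hP (by omega)
      have hSub : S c ≤ n * m + n := by
        have := hstep (c - 1)
        have hcc : c - 1 + 1 = c := by omega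
        rw [hcc] at this
        omega
      -- the two pieces
      set mu0 : ℕ →₀ ℕ := lam.mapRange (fun v => min v c) (by simp) with hmu0
      set nu : ℕ →₀ ℕ := lam.mapRange (fun v => v - c) (by simp) with hnu
      have hmu0size : partSize mu0 = S c := partSize_mapRange lam _ _
      have hsplit : S c + partSize nu = d := by
        rw [partSize_mapRange, ← hsize]
        show _ = lam.sum fun _ v => v
        rw [Finsupp.sum, ← Finset.sum_add_distrib]
        exact Finset.sum_congr rfl (fun i _ => by omega)
      have hnusize : partSize nu = d - S c := by omega
      have hd' : 1 ≤ d - S c := by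
        have : S c ≤ (m + 1) * n := by nlinarith
        omega
      have hnupart : IsPartitionFun nu := by
        intro i j hij
        simp only [hnu, Finsupp.mapRange_apply]
        have := hlam hij; omega
      have hnulen : partLen nu ≤ n :=
        le_trans (Finset.card_le_card Finsupp.support_mapRange) hlen
      obtain ⟨s', mu', hs', hpart', hsum', hpos', hmid', hub', hlen'⟩ :=
        IH (d - S c) (by nlinarith) hd' nu hnupart hnusize hnulen
      refine ⟨s' + 1, Fin.cons mu0 mu', Nat.succ_pos _, ?_, ?_, ?_, ?_, ?_, ?_⟩
      · intro i
        refine Fin.cases ?_ (fun j => ?_) i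
        · rw [Fin.cons_zero]
          intro a b hab
          simp only [hmu0, Finsupp.mapRange_apply]
          have := hlam hab; omega
        · rw [Fin.cons_succ]; exact hpart' j
      · rw [Fin.sum_cons, ← hsum']
        ext i
        simp only [Finsupp.add_apply, hmu0, hnu, Finsupp.mapRange_apply]
        omega
      · intro i
        refine Fin.cases ?_ (fun j => ?_) i
        · rw [Fin.cons_zero, hmu0size]
          have : 0 < n * m := by positivity
          omega
        · rw [Fin.cons_succ]; exact hpos' j
      · intro i
        refine Fin.cases ?_ (fun j => ?_) i
        · intro _
          rw [Fin.cons_zero, hmu0size]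
          simpa using hc1
        · intro hj
          rw [Fin.cons_succ]
          apply hmid' j
          simp only [Fin.val_succ] at hj
          omega
      · intro i
        refine Fin.cases ?_ (fun j => ?_) i
        · rw [Fin.cons_zero, hmu0size]
          calc S c ≤ n * m + n := hSub
            _ = (m + 1) * n := by ring
        · rw [Fin.cons_succ]; exact hub' j
      · intro i
        refine Fin.cases ?_ (fun j => ?_) i
        · rw [Fin.cons_zero]
          exact le_trans (Finset.card_le_card Finsupp.support_mapRange) hlen
        · rw [Fin.cons_succ]; exact hlen' j

/-- Any partition `λ ⊢ d` with `l(λ) ≤ n` can be written as a horizontal concatenation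
(componentwise sum) `λ = μ_1 + … + μ_s` of non-empty partitions `μ_i` with
`n(k-1) < |μ_i| ≤ kn` for all `i < s`, `|μ_s| ≤ kn`, and `l(μ_i) ≤ n` for all `i`. -/
theorem partition_horizontal_decomposition (n k d : ℕ) (hn : 1 ≤ n) (hk : 2 ≤ k)
    (hd : 1 ≤ d) (lam : ℕ →₀ ℕ) (hlam : IsPartitionFun lam) (hsize : partSize lam = d)
    (hlen : partLen lam ≤ n) :
    ∃ (s : ℕ) (mu : Fin s → (ℕ →₀ ℕ)), 0 < s ∧
      (∀ i, IsPartitionFun (mu i)) ∧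
      lam = ∑ i, mu i ∧
      (∀ i, 0 < partSize (mu i)) ∧
      (∀ i : Fin s, (i : ℕ) + 1 < s → n * (k - 1) < partSize (mu i)) ∧
      (∀ i, partSize (mu i) ≤ k * n) ∧
      (∀ i, partLen (mu i) ≤ n) := by
  exact aux n k hn hk d hd lam hlam hsize hlen
end

section
/- Let K be a field, G a group, and V a finite-dimensional K-linear representation of G. Let a ≤ b be positive integers and let S be a set of generators of K[V^a]^G as a K-algebra. Suppose D is an integer such that K[V^b]^G is generated as a K-algebra by its homogeneous elements of degree ≤ D, and such that ⟨K[V^a]^G_d⟩_{GL_b} = K[V^b]^G_d for all d ≤ D. Then ⟨S⟩_{GL_b} generates K[V^b]^G as a K-algebra. -/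
open MvPolynomial

/-- The action of a group element `g : G` on the coordinate ring `K[V^m]`, where the
`n`-dimensional representation `V` of `G` is given (in coordinates) by
`ρ : G →* GLₙ(K)`.  We have `(g · f)(v) = f(g⁻¹ · v)`. -/
noncomputable def gAction {K : Type*} [Field K] {G : Type*} [Group G] {n : ℕ}
    (ρ : G →* Matrix.GeneralLinearGroup (Fin n) K) (m : ℕ) (g : G) :
    MvPolynomial (Fin m × Fin n) K →ₐ[K] MvPolynomial (Fin m × Fin n) K :=
  aeval fun li => ∑ j, C ((↑(ρ g⁻¹) : Matrix (Fin n) (Fin n) K) li.2 j) * X (li.1, j)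

/-- The set of `G`-invariant polynomial functions on `V^m`, i.e. `K[V^m]^G`. -/
def invariants {K : Type*} [Field K] {G : Type*} [Group G] {n : ℕ}
    (ρ : G →* Matrix.GeneralLinearGroup (Fin n) K) (m : ℕ) :
    Set (MvPolynomial (Fin m × Fin n) K) :=
  {f | ∀ g : G, gAction ρ m g f = f}

/-- The action of `σ ∈ GL_m(K)` on `K[V^m] = K[V ⊗ K^m]` through the factor `K^m`:
`(σ · f)(v) = f(σ⁻¹ · v)`, in coordinates `X (l, i) ↦ ∑ l', (σ⁻¹)_{l l'} • X (l', i)`. -/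
noncomputable def glAction {K : Type*} [Field K] (n m : ℕ)
    (σ : Matrix.GeneralLinearGroup (Fin m) K) :
    MvPolynomial (Fin m × Fin n) K →ₐ[K] MvPolynomial (Fin m × Fin n) K :=
  aeval fun li => ∑ l', C ((↑(σ⁻¹) : Matrix (Fin m) (Fin m) K) li.1 l') * X (l', li.2)

/-- The inclusion `K[V^a] ⊆ K[V^b]` (for `a ≤ b`), given by pullback along the
projection of `V^b` onto the first `a` summands. -/
noncomputable def incl {K : Type*} [Field K] (n : ℕ) {a b : ℕ} (h : a ≤ b) :
    MvPolynomial (Fin a × Fin n) K →ₐ[K] MvPolynomial (Fin b × Fin n) K :=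
  rename (Prod.map (Fin.castLE h) id)

/-- The polarization `⟨S⟩_{GL_m}` of a set `S ⊆ K[V^a]` inside `K[V^b]`:
the smallest `GL_b(K)`-stable subspace containing (the image of) `S`, i.e. the span of
`{σ · s : σ ∈ GL_b(K), s ∈ S}`. -/
noncomputable def polarization {K : Type*} [Field K] (n : ℕ) {a b : ℕ} (h : a ≤ b)
    (S : Set (MvPolynomial (Fin a × Fin n) K)) :
    Submodule K (MvPolynomial (Fin b × Fin n) K) :=
  Submodule.span K
    {f | ∃ (σ : Matrix.GeneralLinearGroup (Fin b) K) (s : MvPolynomial (Fin a × Fin n) K),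
      s ∈ S ∧ f = glAction n b σ (incl n h s)}


/-- If `S` generates `K[V^a]^G`, `K[V^b]^G` is generated by its homogeneous elements of
degree `≤ D`, and polarization of the degree-`d` invariants from `a` copies gives all
degree-`d` invariants in `b` copies for every `d ≤ D`, then the polarization `⟨S⟩_{GL_b}`
generates `K[V^b]^G` as a `K`-algebra. -/
theorem polarized_generating_set {K : Type*} [Field K] {G : Type*} [Group G] {n : ℕ}
    (ρ : G →* Matrix.GeneralLinearGroup (Fin n) K) {a b : ℕ} (ha : 1 ≤ a) (hab : a ≤ b)
    (S : Set (MvPolynomial (Fin a × Fin n) K))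
    (hS : S ⊆ invariants ρ a)
    (hSgen : invariants ρ a ⊆ ↑(Algebra.adjoin K S))
    (D : ℕ)
    (hD : invariants ρ b ⊆
      ↑(Algebra.adjoin K {f | f ∈ invariants ρ b ∧ ∃ d ≤ D, f.IsHomogeneous d}))
    (hpol : ∀ d ≤ D,
      polarization n hab {f | f ∈ invariants ρ a ∧ f.IsHomogeneous d} =
        Submodule.span K {f | f ∈ invariants ρ b ∧ f.IsHomogeneous d}) :
    invariants ρ b ⊆ ↑(Algebra.adjoin K (↑(polarization n hab S) :
      Set (MvPolynomial (Fin b × Fin n) K))) := by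
  intro f hf
  have key : ∀ (σ : Matrix.GeneralLinearGroup (Fin b) K)
      (s : MvPolynomial (Fin a × Fin n) K), s ∈ Algebra.adjoin K S →
      glAction n b σ (incl n hab s) ∈
        Algebra.adjoin K (↑(polarization n hab S) : Set (MvPolynomial (Fin b × Fin n) K)) := by
    intro σ s hs
    have h1 : glAction n b σ (incl n hab s) ∈
        Algebra.adjoin K (((glAction n b σ).comp (incl n hab)) '' S) := by
      rw [← AlgHom.map_adjoin]
      exact ⟨s, hs, rfl⟩
    refine Algebra.adjoin_mono ?_ h1
    rintro _ ⟨t, ht, rfl⟩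
    exact Submodule.subset_span ⟨σ, t, ht, rfl⟩
  have key2 : ∀ d ≤ D, ∀ g ∈ invariants ρ b, g.IsHomogeneous d →
      g ∈ Algebra.adjoin K (↑(polarization n hab S) :
        Set (MvPolynomial (Fin b × Fin n) K)) := by
    intro d hd g hgi hgh
    have hmem : g ∈ Submodule.span K
        {f | f ∈ invariants ρ b ∧ f.IsHomogeneous d} :=
      Submodule.subset_span ⟨hgi, hgh⟩
    rw [← hpol d hd] at hmem
    have hsub : polarization n hab {f | f ∈ invariants ρ a ∧ f.IsHomogeneous d} ≤
        Subalgebra.toSubmodule (Algebra.adjoin K (↑(polarization n hab S) :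
          Set (MvPolynomial (Fin b × Fin n) K))) := by
      rw [polarization, Submodule.span_le]
      rintro _ ⟨σ, s, ⟨hsi, _⟩, rfl⟩
      exact key σ s (hSgen hsi)
    exact hsub hmem
  refine Algebra.adjoin_le ?_ (hD hf)
  rintro g ⟨hgi, d, hd, hgh⟩
  exact key2 d hd g hgi hgh
end
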